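/- arXiv:math/0611418 — 3 statements merged into one kernel-verified Lean document; each statement's English description precedes it below -/
import Mathlib

section
/- In the common belief model with measures μ_N on [-1,1], if μ̄_N = ∫|ζ|dμ_N(ζ) ≥ C·N^{ε-1/2} for some C, ε > 0 and all large N, then E_{μ_N}[|Σ_{i=1}^N X_i|] / (N·μ̄_N) → 1 as N → ∞. -/
open MeasureTheory Filter

noncomputable def cbCube (N : ℕ) : Finset (Fin N → ℝ) :=
  Fintype.piFinset fun _ => ({1, -1} : Finset ℝ)

noncomputable def cbWgt (N : ℕ) (ζ : ℝ) (ξ : Fin N → ℝ) : ℝ :=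
  ∏ i, (if ξ i = 1 then (1 + ζ) / 2 else (1 - ζ) / 2)

lemma cbSum_prod {N : ℕ} (f : Fin N → ℝ → ℝ) :
    ∑ ξ ∈ cbCube N, (∏ j, f j (ξ j)) = ∏ j, (f j 1 + f j (-1)) := by
  rw [cbCube, ← Finset.prod_univ_sum]
  refine Finset.prod_congr rfl fun j _ => ?_
  rw [Finset.sum_pair (by norm_num : (1:ℝ) ≠ -1)]

lemma cbWgt_sum {N : ℕ} (ζ : ℝ) : ∑ ξ ∈ cbCube N, cbWgt N ζ ξ = 1 := by
  have h := cbSum_prod (N := N) (fun _ s => if s = 1 then (1 + ζ) / 2 else (1 - ζ) / 2)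
  simp only [cbWgt]
  rw [h]
  have : ((if (1:ℝ) = 1 then (1 + ζ) / 2 else (1 - ζ) / 2)
      + if (-1:ℝ) = 1 then (1 + ζ) / 2 else (1 - ζ) / 2) = 1 := by
    rw [if_pos rfl, if_neg (by norm_num : ¬(-1:ℝ) = 1)]; ring
  rw [Finset.prod_congr rfl fun j _ => this, Finset.prod_const_one]

lemma cbPair_sum {N : ℕ} (ζ : ℝ) (k l : Fin N) :
    ∑ ξ ∈ cbCube N, (ξ k * ξ l) * cbWgt N ζ ξ = if k = l then 1 else ζ ^ 2 := by
  have h1 : ∀ ξ : Fin N → ℝ, (ξ k * ξ l) * cbWgt N ζ ξ =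
      ∏ j, ((if j = k then ξ j else 1) * (if j = l then ξ j else 1)
        * (if ξ j = 1 then (1 + ζ) / 2 else (1 - ζ) / 2)) := by
    intro ξ
    rw [Finset.prod_mul_distrib, Finset.prod_mul_distrib, cbWgt]
    simp [Finset.prod_ite_eq']
  simp_rw [h1]
  rw [cbSum_prod (f := fun j s => (if j = k then s else 1) * (if j = l then s else 1)
    * (if s = 1 then (1 + ζ) / 2 else (1 - ζ) / 2))]
  have h2 : ∀ j : Fin N, ((if j = k then (1:ℝ) else 1) * (if j = l then (1:ℝ) else 1)
        * (if (1:ℝ) = 1 then (1 + ζ) / 2 else (1 - ζ) / 2))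
      + ((if j = k then (-1:ℝ) else 1) * (if j = l then (-1:ℝ) else 1)
        * (if (-1:ℝ) = 1 then (1 + ζ) / 2 else (1 - ζ) / 2))
      = (if j = k then (if j = l then 1 else ζ) else (if j = l then ζ else 1)) := by
    intro j
    norm_num
    split_ifs <;> ring
  rw [Finset.prod_congr rfl fun j _ => h2 j]
  by_cases hkl : k = l
  · subst hkl
    rw [if_pos rfl]
    have : ∀ j : Fin N,
        (if j = k then (if j = k then (1:ℝ) else ζ) else (if j = k then ζ else 1)) = 1 := by
      intro j; split_ifs <;> rfl
    rw [Finset.prod_congr rfl fun j _ => this j, Finset.prod_const_one]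
  · rw [if_neg hkl]
    have : ∀ j : Fin N, (if j = k then (if j = l then (1:ℝ) else ζ) else (if j = l then ζ else 1))
        = (if j = k then ζ else 1) * (if j = l then ζ else 1) := by
      intro j; split_ifs with h h' <;> simp_all <;> ring
    rw [Finset.prod_congr rfl fun j _ => this j, Finset.prod_mul_distrib]
    simp [Finset.prod_ite_eq', hkl, sq]

lemma cbSingle_sum {N : ℕ} (ζ : ℝ) (k : Fin N) :
    ∑ ξ ∈ cbCube N, ξ k * cbWgt N ζ ξ = ζ := by
  have h1 : ∀ ξ : Fin N → ℝ, ξ k * cbWgt N ζ ξ =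
      ∏ j, ((if j = k then ξ j else 1)
        * (if ξ j = 1 then (1 + ζ) / 2 else (1 - ζ) / 2)) := by
    intro ξ
    rw [Finset.prod_mul_distrib, cbWgt]
    simp [Finset.prod_ite_eq']
  simp_rw [h1]
  rw [cbSum_prod (f := fun j s => (if j = k then s else 1)
    * (if s = 1 then (1 + ζ) / 2 else (1 - ζ) / 2))]
  have h2 : ∀ j : Fin N, ((if j = k then (1:ℝ) else 1)
        * (if (1:ℝ) = 1 then (1 + ζ) / 2 else (1 - ζ) / 2))
      + ((if j = k then (-1:ℝ) else 1)
        * (if (-1:ℝ) = 1 then (1 + ζ) / 2 else (1 - ζ) / 2))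
      = (if j = k then ζ else 1) := by
    intro j; norm_num; split_ifs <;> ring
  rw [Finset.prod_congr rfl fun j _ => h2 j]
  simp [Finset.prod_ite_eq']


lemma cbS_sum {N : ℕ} (ζ : ℝ) :
    ∑ ξ ∈ cbCube N, (∑ i, ξ i) * cbWgt N ζ ξ = N * ζ := by
  simp_rw [Finset.sum_mul]
  rw [Finset.sum_comm]
  simp [cbSingle_sum]

lemma cbS2_sum {N : ℕ} (ζ : ℝ) :
    ∑ ξ ∈ cbCube N, (∑ i, ξ i) ^ 2 * cbWgt N ζ ξ
      = N + ((N:ℝ) ^ 2 - N) * ζ ^ 2 := by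
  have h : ∀ ξ : Fin N → ℝ, (∑ i, ξ i) ^ 2 * cbWgt N ζ ξ
      = ∑ k, ∑ l, (ξ k * ξ l) * cbWgt N ζ ξ := by
    intro ξ
    rw [sq, Finset.sum_mul_sum]
    simp [Finset.sum_mul]
  simp_rw [h]
  rw [Finset.sum_comm]
  have h2 : ∀ k : Fin N, ∑ ξ ∈ cbCube N, ∑ l, (ξ k * ξ l) * cbWgt N ζ ξ
      = 1 + ((N:ℝ) - 1) * ζ ^ 2 := by
    intro k
    rw [Finset.sum_comm]
    have : ∀ l : Fin N, ∑ ξ ∈ cbCube N, (ξ k * ξ l) * cbWgt N ζ ξ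
        = if k = l then 1 else ζ ^ 2 := fun l => cbPair_sum ζ k l
    rw [Finset.sum_congr rfl fun l _ => this l]
    have h3 : ∀ l : Fin N, (if k = l then (1:ℝ) else ζ ^ 2)
        = ζ ^ 2 + (if k = l then 1 - ζ ^ 2 else 0) := by
      intro l; split_ifs <;> ring
    rw [Finset.sum_congr rfl fun l _ => h3 l, Finset.sum_add_distrib,
      Finset.sum_ite_eq Finset.univ k (fun _ => (1:ℝ) - ζ ^ 2), Finset.sum_const,
      Finset.card_univ]
    simp
    ring
  rw [Finset.sum_congr rfl fun k _ => h2 k, Finset.sum_const, Finset.card_univ]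
  simp
  ring

lemma cbVar_sum {N : ℕ} (ζ : ℝ) :
    ∑ ξ ∈ cbCube N, ((∑ i, ξ i) - N * ζ) ^ 2 * cbWgt N ζ ξ
      = N * (1 - ζ ^ 2) := by
  have h : ∀ ξ : Fin N → ℝ, ((∑ i, ξ i) - N * ζ) ^ 2 * cbWgt N ζ ξ
      = (∑ i, ξ i) ^ 2 * cbWgt N ζ ξ
        - (2 * (N * ζ)) * ((∑ i, ξ i) * cbWgt N ζ ξ)
        + (N * ζ) ^ 2 * cbWgt N ζ ξ := fun ξ => by ring
  simp_rw [h]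
  rw [Finset.sum_add_distrib, Finset.sum_sub_distrib, ← Finset.mul_sum, ← Finset.mul_sum,
    cbS2_sum, cbS_sum, cbWgt_sum]
  ring


lemma cbWgt_nonneg {N : ℕ} {ζ : ℝ} (hζ : ζ ∈ Set.Icc (-1:ℝ) 1) (ξ : Fin N → ℝ) :
    0 ≤ cbWgt N ζ ξ := by
  refine Finset.prod_nonneg fun i _ => ?_
  obtain ⟨h1, h2⟩ := hζ
  split_ifs <;> linarith

lemma cbWgt_le_one {N : ℕ} {ζ : ℝ} (hζ : ζ ∈ Set.Icc (-1:ℝ) 1) (ξ : Fin N → ℝ) :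
    cbWgt N ζ ξ ≤ 1 := by
  refine Finset.prod_le_one (fun i _ => ?_) (fun i _ => ?_)
  · obtain ⟨h1, h2⟩ := hζ; split_ifs <;> linarith
  · obtain ⟨h1, h2⟩ := hζ; split_ifs <;> linarith

lemma cbWgt_continuous {N : ℕ} (ξ : Fin N → ℝ) :
    Continuous fun ζ => cbWgt N ζ ξ := by
  unfold cbWgt
  refine continuous_finset_prod _ fun i _ => ?_
  by_cases h : ξ i = 1 <;> simp only [h, if_pos, if_neg, if_true, if_false] <;> fun_prop

lemma cbAbsS_le {N : ℕ} {ξ : Fin N → ℝ} (hξ : ξ ∈ cbCube N) :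
    |∑ i, ξ i| ≤ N := by
  calc |∑ i, ξ i| ≤ ∑ i, |ξ i| := Finset.abs_sum_le_sum_abs _ _
  _ = N := by
    have : ∀ i, |ξ i| = 1 := by
      intro i
      have := (Fintype.mem_piFinset.mp hξ) i
      simp only [Finset.mem_insert, Finset.mem_singleton] at this
      rcases this with h | h <;> rw [h] <;> norm_num
    simp [this]

lemma cbBound {N : ℕ} {ζ : ℝ} (hζ : ζ ∈ Set.Icc (-1:ℝ) 1) :
    abs ((∑ ξ ∈ cbCube N, |∑ i, ξ i| * cbWgt N ζ ξ) - N * |ζ|) ≤ Real.sqrt N := by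
  have hw := fun ξ => cbWgt_nonneg (N := N) hζ ξ
  have e1 : (∑ ξ ∈ cbCube N, |∑ i, ξ i| * cbWgt N ζ ξ) - N * |ζ|
      = ∑ ξ ∈ cbCube N, (|∑ i, ξ i| - N * |ζ|) * cbWgt N ζ ξ := by
    simp_rw [sub_mul]
    rw [Finset.sum_sub_distrib, ← Finset.mul_sum, cbWgt_sum, mul_one]
  rw [e1]
  have e2 : ∀ ξ : Fin N → ℝ, abs ((|∑ i, ξ i| - N * |ζ|) * cbWgt N ζ ξ)
      ≤ |(∑ i, ξ i) - N * ζ| * cbWgt N ζ ξ := by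
    intro ξ
    rw [abs_mul, abs_of_nonneg (hw ξ)]
    refine mul_le_mul_of_nonneg_right ?_ (hw ξ)
    have : (N:ℝ) * |ζ| = |(N:ℝ) * ζ| := by
      rw [abs_mul, Nat.abs_cast]
    rw [this]
    exact abs_abs_sub_abs_le_abs_sub _ _
  calc abs (∑ ξ ∈ cbCube N, (|∑ i, ξ i| - N * |ζ|) * cbWgt N ζ ξ)
      ≤ ∑ ξ ∈ cbCube N, abs ((|∑ i, ξ i| - N * |ζ|) * cbWgt N ζ ξ) :=
        Finset.abs_sum_le_sum_abs _ _
    _ ≤ ∑ ξ ∈ cbCube N, |(∑ i, ξ i) - N * ζ| * cbWgt N ζ ξ :=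
        Finset.sum_le_sum fun ξ _ => e2 ξ
    _ ≤ Real.sqrt N := by
        have cs := Finset.sum_mul_sq_le_sq_mul_sq (cbCube N)
          (fun ξ => Real.sqrt (cbWgt N ζ ξ))
          (fun ξ => |(∑ i, ξ i) - N * ζ| * Real.sqrt (cbWgt N ζ ξ))
        have e3 : ∀ ξ : Fin N → ℝ,
            Real.sqrt (cbWgt N ζ ξ) * (|(∑ i, ξ i) - N * ζ| * Real.sqrt (cbWgt N ζ ξ))
            = |(∑ i, ξ i) - N * ζ| * cbWgt N ζ ξ := by
          intro ξ
          rw [mul_comm, mul_assoc, Real.mul_self_sqrt (hw ξ)]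
        have e4 : ∀ ξ : Fin N → ℝ, (Real.sqrt (cbWgt N ζ ξ)) ^ 2 = cbWgt N ζ ξ :=
          fun ξ => Real.sq_sqrt (hw ξ)
        have e5 : ∀ ξ : Fin N → ℝ,
            (|(∑ i, ξ i) - N * ζ| * Real.sqrt (cbWgt N ζ ξ)) ^ 2
            = ((∑ i, ξ i) - N * ζ) ^ 2 * cbWgt N ζ ξ := by
          intro ξ
          rw [mul_pow, e4, sq_abs]
        simp_rw [e3, e4, e5] at cs
        rw [cbWgt_sum, cbVar_sum, one_mul] at cs
        have hnn : 0 ≤ ∑ ξ ∈ cbCube N, |(∑ i, ξ i) - N * ζ| * cbWgt N ζ ξ :=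
          Finset.sum_nonneg fun ξ _ => mul_nonneg (abs_nonneg _) (hw ξ)
        refine (Real.le_sqrt hnn (Nat.cast_nonneg N)).mpr ?_
        refine cs.trans ?_
        have : ζ ^ 2 ≥ 0 := sq_nonneg ζ
        nlinarith [Nat.cast_nonneg (α := ℝ) N]


lemma cbWgt_integrable {N : ℕ} (μ : Measure ℝ) [IsProbabilityMeasure μ]
    (hμ : ∀ᵐ ζ ∂μ, ζ ∈ Set.Icc (-1:ℝ) 1) (ξ : Fin N → ℝ) :
    Integrable (fun ζ => cbWgt N ζ ξ) μ := by
  refine Integrable.mono' (integrable_const 1) (cbWgt_continuous ξ).aestronglyMeasurable ?_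
  filter_upwards [hμ] with ζ hζ
  rw [Real.norm_eq_abs, abs_of_nonneg (cbWgt_nonneg hζ ξ)]
  exact cbWgt_le_one hζ ξ

/-- The expected absolute margin as an integral against the belief measure. -/
lemma cbRepr {N : ℕ} (μ : Measure ℝ) [IsProbabilityMeasure μ]
    (hμ : ∀ᵐ ζ ∂μ, ζ ∈ Set.Icc (-1:ℝ) 1)
    (P : Measure (Fin N → ℝ)) [IsProbabilityMeasure P]
    (hP : ∀ ξ : Fin N → ℝ, (∀ i, ξ i = 1 ∨ ξ i = -1) →
      ((P) {ξ}).toReal = ∫ ζ, ∏ i, (if ξ i = 1 then (1 + ζ) / 2 else (1 - ζ) / 2) ∂μ) :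
    ∫ x, |∑ i, x i| ∂P = ∫ ζ, (∑ ξ ∈ cbCube N, |∑ i, ξ i| * cbWgt N ζ ξ) ∂μ := by
  have hmem : ∀ ξ ∈ cbCube N, ∀ i, ξ i = 1 ∨ ξ i = -1 := by
    intro ξ hξ i
    have := (Fintype.mem_piFinset.mp hξ) i
    simpa using this
  have hPt : ∀ ξ ∈ cbCube N, (P {ξ}).toReal = ∫ ζ, cbWgt N ζ ξ ∂μ := by
    intro ξ hξ
    rw [hP ξ (hmem ξ hξ)]; rfl
  have hint : ∀ ξ : Fin N → ℝ, Integrable (fun ζ => cbWgt N ζ ξ) μ :=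
    fun ξ => cbWgt_integrable μ hμ ξ
  -- total mass of the cube is 1
  have hsum1 : ∑ ξ ∈ cbCube N, (P {ξ}).toReal = 1 := by
    rw [Finset.sum_congr rfl hPt, ← integral_finset_sum _ (fun ξ _ => hint ξ)]
    simp_rw [cbWgt_sum]
    simp
  have hbiU : (⋃ ξ ∈ cbCube N, ({ξ} : Set (Fin N → ℝ))) = ↑(cbCube N) :=
    Set.biUnion_of_singleton _
  have hmeas : P ↑(cbCube N) = ∑ ξ ∈ cbCube N, P {ξ} := by
    rw [← hbiU]
    exact measure_biUnion_finset
      (fun x _ y _ hxy => by simp [Set.disjoint_singleton, hxy])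
      (fun ξ _ => measurableSet_singleton ξ)
  have hfull : P ↑(cbCube N) = 1 := by
    rw [← ENNReal.toReal_eq_one_iff, hmeas,
      ENNReal.toReal_sum (fun ξ _ => measure_ne_top P _)]
    exact hsum1
  have hcompl : P (↑(cbCube N) : Set (Fin N → ℝ))ᶜ = 0 :=
    (prob_compl_eq_zero_iff ((cbCube N).finite_toSet.measurableSet)).mpr hfull
  have hres : P.restrict ↑(cbCube N) = P :=
    Measure.restrict_eq_self_of_ae_mem (by
      rw [MeasureTheory.ae_iff]
      exact hcompl)
  calc ∫ x, |∑ i, x i| ∂P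
      = ∫ x in ↑(cbCube N), |∑ i, x i| ∂P := by rw [hres]
    _ = ∑ ξ ∈ cbCube N, (P {ξ}).toReal • |∑ i, ξ i| :=
        by exact integral_finset _ (hf := IntegrableOn.finset)
    _ = ∑ ξ ∈ cbCube N, ∫ ζ, |∑ i, ξ i| * cbWgt N ζ ξ ∂μ := by
        refine Finset.sum_congr rfl fun ξ hξ => ?_
        rw [hPt ξ hξ, smul_eq_mul, mul_comm, ← integral_const_mul]
    _ = ∫ ζ, (∑ ξ ∈ cbCube N, |∑ i, ξ i| * cbWgt N ζ ξ) ∂μ := by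
        rw [← integral_finset_sum _ (fun ξ _ => (hint ξ).const_mul _)]

/-- In the common belief model with belief measures μ_N, if
μ̄_N = ∫|ζ|dμ_N ≥ C·N^(ε−1/2) for some C, ε > 0 and all large N, then the
expected margin satisfies E[|Σ X_i|] / (N·μ̄_N) → 1 as N → ∞. -/
theorem common_belief_margin_asymptotics_large_mubar
    (μs : ℕ → Measure ℝ) [∀ N, IsProbabilityMeasure (μs N)]
    (hμsupp : ∀ N, ∀ᵐ ζ ∂(μs N), ζ ∈ Set.Icc (-1 : ℝ) 1)
    (P : (N : ℕ) → Measure (Fin N → ℝ)) [∀ N, IsProbabilityMeasure (P N)]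
    (hP : ∀ N, ∀ ξ : Fin N → ℝ, (∀ i, ξ i = 1 ∨ ξ i = -1) →
      ((P N) {ξ}).toReal
        = ∫ ζ, ∏ i, (if ξ i = 1 then (1 + ζ) / 2 else (1 - ζ) / 2) ∂(μs N))
    (hlower : ∃ C > (0 : ℝ), ∃ ε > (0 : ℝ), ∀ᶠ N : ℕ in atTop,
      C * (N : ℝ) ^ (ε - 1 / 2) ≤ ∫ ζ, |ζ| ∂(μs N)) :
    Tendsto (fun N : ℕ =>
        (∫ x, |∑ i, x i| ∂(P N)) / ((N : ℝ) * ∫ ζ, |ζ| ∂(μs N)))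
      atTop (nhds 1) := by
  obtain ⟨C, hC, ε, hε, hev⟩ := hlower
  set r : ℕ → ℝ := fun N =>
    (∫ x, |∑ i, x i| ∂(P N)) / ((N : ℝ) * ∫ ζ, |ζ| ∂(μs N)) with hr
  -- the key eventual bound
  have key : ∀ᶠ N : ℕ in atTop, ‖r N - 1‖ ≤ C⁻¹ * (N : ℝ) ^ (-ε) := by
    filter_upwards [hev, eventually_ge_atTop 1] with N hlow hN1
    have hNpos : (0:ℝ) < N := by exact_mod_cast hN1
    set μbar := ∫ ζ, |ζ| ∂(μs N) with hμbar
    have hμbarpos : 0 < μbar :=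
      lt_of_lt_of_le (by positivity) hlow
    have hDpos : 0 < (N:ℝ) * μbar := by positivity
    set I := ∫ x, |∑ i, x i| ∂(P N) with hI
    -- key estimate |I - N μbar| ≤ √N
    have hIg : I = ∫ ζ, (∑ ξ ∈ cbCube N, |∑ i, ξ i| * cbWgt N ζ ξ) ∂(μs N) :=
      cbRepr (μs N) (hμsupp N) (P N) (hP N)
    have hest : |I - (N:ℝ) * μbar| ≤ Real.sqrt N := by
      have habs : Integrable (fun ζ => (N:ℝ) * |ζ|) (μs N) := by
        refine Integrable.mono' (integrable_const (N:ℝ))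
          ((continuous_const.mul continuous_abs).aestronglyMeasurable) ?_
        filter_upwards [hμsupp N] with ζ hζ
        have h1 : |ζ| ≤ 1 := abs_le.mpr ⟨hζ.1, hζ.2⟩
        rw [Real.norm_eq_abs, abs_of_nonneg (by positivity : (0:ℝ) ≤ (N:ℝ) * |ζ|)]
        nlinarith [abs_nonneg ζ]
      have hgint : Integrable
          (fun ζ => ∑ ξ ∈ cbCube N, |∑ i, ξ i| * cbWgt N ζ ξ) (μs N) :=
        integrable_finset_sum _ fun ξ _ =>
          ((cbWgt_integrable (μs N) (hμsupp N) ξ).const_mul _)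
      have e1 : I - (N:ℝ) * μbar
          = ∫ ζ, ((∑ ξ ∈ cbCube N, |∑ i, ξ i| * cbWgt N ζ ξ) - (N:ℝ) * |ζ|) ∂(μs N) := by
        rw [integral_sub hgint habs, ← hIg, integral_const_mul]
      rw [e1]
      have := norm_integral_le_of_norm_le_const (μ := μs N)
        (f := fun ζ => (∑ ξ ∈ cbCube N, |∑ i, ξ i| * cbWgt N ζ ξ) - (N:ℝ) * |ζ|)
        (C := Real.sqrt N) (by
          filter_upwards [hμsupp N] with ζ hζ
          rw [Real.norm_eq_abs]
          exact cbBound hζ)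
      simpa using this
    -- convert to the ratio bound
    have e2 : r N - 1 = (I - (N:ℝ) * μbar) / ((N:ℝ) * μbar) := by
      field_simp [hr]
      have hrN : r N = I / ((N:ℝ) * μbar) := rfl
      rw [hrN, mul_assoc, sub_mul, div_mul_cancel₀ _ hDpos.ne', one_mul]
    rw [Real.norm_eq_abs, e2, abs_div, abs_of_pos hDpos]
    have step1 : |I - (N:ℝ) * μbar| / ((N:ℝ) * μbar)
        ≤ Real.sqrt N / ((N:ℝ) * μbar) := by gcongr
    refine step1.trans ?_
    have hpow : (N:ℝ) ^ (ε + 1/2) = (N:ℝ) * (N:ℝ) ^ (ε - 1/2) := by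
      rw [show ε + 1/2 = 1 + (ε - 1/2) by ring, Real.rpow_add hNpos, Real.rpow_one]
    have hD2 : C * (N:ℝ) ^ (ε + 1/2) ≤ (N:ℝ) * μbar := by
      have h := mul_le_mul_of_nonneg_left hlow (le_of_lt hNpos)
      calc C * (N:ℝ) ^ (ε + 1/2) = (N:ℝ) * (C * (N:ℝ) ^ (ε - 1/2)) := by
            rw [hpow]; ring
        _ ≤ (N:ℝ) * μbar := h
    have hsqrtpos : 0 < Real.sqrt N := Real.sqrt_pos.mpr hNpos
    have step2 : Real.sqrt N / ((N:ℝ) * μbar) ≤ Real.sqrt N / (C * (N:ℝ) ^ (ε + 1/2)) := by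
      gcongr
    refine step2.trans (le_of_eq ?_)
    rw [Real.sqrt_eq_rpow]
    calc (N:ℝ) ^ ((1:ℝ)/2) / (C * (N:ℝ) ^ (ε + 1/2))
        = C⁻¹ * ((N:ℝ) ^ ((1:ℝ)/2) / (N:ℝ) ^ (ε + 1/2)) := by ring
      _ = C⁻¹ * (N:ℝ) ^ ((1:ℝ)/2 - (ε + 1/2)) := by rw [← Real.rpow_sub hNpos]
      _ = C⁻¹ * (N:ℝ) ^ (-ε) := by norm_num
  -- conclude via squeezing
  have hz : Tendsto (fun N : ℕ => C⁻¹ * (N : ℝ) ^ (-ε)) atTop (nhds 0) := by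
    have h1 : Tendsto (fun N : ℕ => ((N:ℝ)) ^ (-ε)) atTop (nhds 0) :=
      (tendsto_rpow_neg_atTop hε).comp tendsto_natCast_atTop_atTop
    simpa using h1.const_mul C⁻¹
  have h0 : Tendsto (fun N => r N - 1) atTop (nhds 0) := squeeze_zero_norm' key hz
  have := h0.add (tendsto_const_nhds (x := (1:ℝ)))
  simpa using this
end

section
/- For J > 1, the equation tanh(J·C) = C has a unique positive solution C(J), and for 0 ≤ J ≤ 1 the equation tanh(J·C) = C has no positive solution. -/
open Real

private lemma tanh_hasDerivAt (x : ℝ) :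
    HasDerivAt Real.tanh (1 / Real.cosh x ^ 2) x := by
  have h := (Real.hasDerivAt_sinh x).div (Real.hasDerivAt_cosh x) (Real.cosh_pos x).ne'
  have he : (fun y => Real.sinh y / Real.cosh y) = Real.tanh := by
    funext y; rw [Real.tanh_eq_sinh_div_cosh]
  rw [show (Real.sinh / Real.cosh) = Real.tanh from he] at h
  refine h.congr_deriv ?_
  have h1 := Real.cosh_sq_sub_sinh_sq x
  have h2 := (Real.cosh_pos x).ne'
  rw [div_left_inj' (pow_ne_zero 2 h2)]
  nlinarith [h1]

private lemma tanh_lt_one' (x : ℝ) : Real.tanh x < 1 := by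
  rw [Real.tanh_eq_sinh_div_cosh, div_lt_one (Real.cosh_pos x)]
  nlinarith [Real.sinh_sub_cosh x, Real.exp_pos (-x)]

private lemma continuous_tanh' : Continuous Real.tanh := by
  have he : (fun y => Real.sinh y / Real.cosh y) = Real.tanh := by
    funext y; rw [Real.tanh_eq_sinh_div_cosh]
  rw [← he]
  exact Real.continuous_sinh.div Real.continuous_cosh fun x => (Real.cosh_pos x).ne'

private lemma tanh_lt_self {x : ℝ} (hx : 0 < x) : Real.tanh x < x := by
  have hmono : StrictMonoOn (fun y => y - Real.tanh y) (Set.Ici (0:ℝ)) := by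
    apply strictMonoOn_of_deriv_pos (convex_Ici 0)
    · exact (continuous_id.sub continuous_tanh').continuousOn
    · intro y hy
      rw [interior_Ici] at hy
      have hd : HasDerivAt (fun y => y - Real.tanh y) (1 - 1 / Real.cosh y ^ 2) y :=
        (hasDerivAt_id y).sub (tanh_hasDerivAt y)
      rw [hd.deriv]
      have h1 : 1 < Real.cosh y := Real.one_lt_cosh.2 (ne_of_gt hy)
      have h2 : (0:ℝ) < Real.cosh y ^ 2 := by positivity
      rw [sub_pos, div_lt_one h2]
      nlinarith
  have := hmono (Set.self_mem_Ici) (Set.mem_Ici.2 hx.le) hx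
  simpa using this

/-- Mean-field fixed point equation: for J > 1, tanh(J·C) = C has a unique
positive solution; for 0 ≤ J ≤ 1 it has no positive solution. -/
theorem curie_weiss_fixed_point (J : ℝ) :
    (1 < J → ∃! C : ℝ, 0 < C ∧ Real.tanh (J * C) = C) ∧
    (0 ≤ J → J ≤ 1 → ∀ C : ℝ, 0 < C → Real.tanh (J * C) ≠ C) := by
  constructor
  · -- J > 1 case
    intro hJ
    have hJ0 : 0 < J := lt_trans one_pos hJ
    set f : ℝ → ℝ := fun x => Real.tanh (J * x) - x with hf
    have hfc : Continuous f := (continuous_tanh'.comp (continuous_const.mul continuous_id)).sub continuous_id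
    -- derivative of tanh (J * x)
    have hdt : ∀ x : ℝ, HasDerivAt (fun y => Real.tanh (J * y)) (1 / Real.cosh (J * x) ^ 2 * J) x := by
      intro x
      have hi : HasDerivAt (fun y : ℝ => J * y) J x := by
        simpa using (hasDerivAt_id x).const_mul J
      exact (tanh_hasDerivAt (J * x)).comp x hi
    -- f has positive derivative at 0
    have hd0 : HasDerivAt f (J - 1) 0 := by
      have h := (hdt 0).sub (hasDerivAt_id 0)
      simp at h; exact h
    -- find a > 0 with f a > 0
    have hslope := hasDerivAt_iff_tendsto_slope.1 hd0
    have hev : ∀ᶠ x in nhdsWithin 0 {(0:ℝ)}ᶜ, 0 < slope f 0 x :=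
      hslope (eventually_gt_nhds (by linarith : (0:ℝ) < J - 1))
    have hev' : ∀ᶠ x in nhdsWithin 0 (Set.Ioi 0), 0 < slope f 0 x :=
      hev.filter_mono (nhdsWithin_mono 0 (fun x hx => ne_of_gt hx))
    obtain ⟨a, haslope, hapos⟩ := (hev'.and self_mem_nhdsWithin).exists
    have hfa : 0 < f a := by
      have : slope f 0 a = f a / a := by
        simp [slope, hf, div_eq_inv_mul]
      rw [this] at haslope
      exact (div_pos_iff.1 haslope).resolve_right (fun h => absurd hapos (not_lt.2 h.2.le)) |>.1
    -- find b > a with f b < 0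
    set b : ℝ := a + 2 with hb
    have hab : a < b := by simp [hb]
    have hfb : f b < 0 := by
      have h1 : Real.tanh (J * b) < 1 := tanh_lt_one' _
      have : (2:ℝ) ≤ b := by simp [hb]; linarith
      simp only [hf]; linarith
    -- IVT
    obtain ⟨C, hC, hfC⟩ := intermediate_value_Icc' hab.le hfc.continuousOn
      (Set.mem_Icc.2 ⟨hfb.le, hfa.le⟩)
    have hCpos : 0 < C := lt_of_lt_of_le hapos hC.1
    have hCeq : Real.tanh (J * C) = C := by
      have : Real.tanh (J * C) - C = 0 := hfC
      linarith
    -- uniqueness via strict convexity of g x = x - tanh (J x) on [0, ∞)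
    have hconv : StrictConvexOn ℝ (Set.Ici (0:ℝ)) (fun x => x - Real.tanh (J * x)) := by
      apply StrictMonoOn.strictConvexOn_of_deriv (convex_Ici 0)
      · exact (continuous_id.sub (continuous_tanh'.comp (continuous_const.mul continuous_id))).continuousOn
      · rw [interior_Ici]
        intro x hx y hy hxy
        have hdx : HasDerivAt (fun z => z - Real.tanh (J * z)) (1 - 1 / Real.cosh (J * x) ^ 2 * J) x :=
          (hasDerivAt_id x).sub (hdt x)
        have hdy : HasDerivAt (fun z => z - Real.tanh (J * z)) (1 - 1 / Real.cosh (J * y) ^ 2 * J) y :=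
          (hasDerivAt_id y).sub (hdt y)
        rw [hdx.deriv, hdy.deriv]
        have hx' : (0:ℝ) < x := hx
        have hy' : (0:ℝ) < y := hy
        have hcc : Real.cosh (J * x) < Real.cosh (J * y) := by
          rw [Real.cosh_lt_cosh]
          rw [abs_of_pos (mul_pos hJ0 hx'), abs_of_pos (mul_pos hJ0 hy')]
          exact (mul_lt_mul_iff_right₀ hJ0).2 hxy
        have h1 : (0:ℝ) < Real.cosh (J * x) := Real.cosh_pos _
        have h2 : (0:ℝ) < Real.cosh (J * y) := Real.cosh_pos _
        have : 1 / Real.cosh (J * y) ^ 2 * J < 1 / Real.cosh (J * x) ^ 2 * J := by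
          apply mul_lt_mul_of_pos_right _ hJ0
          apply one_div_lt_one_div_of_lt (by positivity)
          nlinarith
        linarith
    -- no two distinct positive solutions
    have huniq : ∀ x y : ℝ, 0 < x → Real.tanh (J * x) = x → 0 < y → Real.tanh (J * y) = y →
        x < y → False := by
      intro x y hx hfx hy hfy hxy
      set t : ℝ := x / y with ht
      have ht0 : 0 < t := div_pos hx hy
      have ht1 : t < 1 := (div_lt_one hy).2 hxy
      have key := hconv.2 (Set.self_mem_Ici) (Set.mem_Ici.2 hy.le)
        (ne_of_lt hy) (by linarith : (0:ℝ) < 1 - t) ht0 (by ring)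
      have hxy' : (1 - t) • (0:ℝ) + t • y = x := by
        rw [smul_zero, zero_add, smul_eq_mul, ht, div_mul_cancel₀ x hy.ne']
      rw [hxy'] at key
      simp only [smul_eq_mul, mul_zero, Real.tanh_zero] at key
      rw [hfx, hfy] at key
      simp at key
    refine ⟨C, ⟨hCpos, hCeq⟩, fun y ⟨hy0, hyeq⟩ => ?_⟩
    rcases lt_trichotomy y C with h | h | h
    · exact absurd (huniq y C hy0 hyeq hCpos hCeq h) (fun h => h)
    · exact h
    · exact absurd (huniq C y hCpos hCeq hy0 hyeq h) (fun h => h)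
  · -- 0 ≤ J ≤ 1 case
    intro hJ0 hJ1 C hC heq
    rcases eq_or_lt_of_le hJ0 with h | h
    · rw [← h] at heq; simp at heq; linarith
    · have h1 : 0 < J * C := by positivity
      have h2 : Real.tanh (J * C) < J * C := tanh_lt_self h1
      have h3 : J * C ≤ C := by nlinarith
      linarith
end

section
/- Let E_0 denote expectation for N i.i.d. symmetric ±1 random variables X_i, and for 0 < J < 1 define Z_{J,N} = E_0[exp((J/2)·(N^{-1/2}·Σ X_i)²)]. Then Z_{J,N} → 1/√(1-J) as N → ∞. -/
open MeasureTheory ProbabilityTheory Filter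

lemma gauss_lin (c : ℝ) :
    ∫ t : ℝ, Real.exp (-(t ^ 2) / 2 + c * t)
      = Real.sqrt (2 * Real.pi) * Real.exp (c ^ 2 / 2) := by
  have h1 : ∀ t : ℝ, -(t ^ 2) / 2 + c * t = -(1/2) * (t - c) ^ 2 + c ^ 2 / 2 := by
    intro t; ring
  calc ∫ t : ℝ, Real.exp (-(t ^ 2) / 2 + c * t)
      = ∫ t : ℝ, Real.exp (-(1/2) * (t - c) ^ 2) * Real.exp (c ^ 2 / 2) := by
        congr 1; funext t; rw [h1 t, Real.exp_add]
    _ = (∫ t : ℝ, Real.exp (-(1/2) * (t - c) ^ 2)) * Real.exp (c ^ 2 / 2) := by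
        rw [integral_mul_const]
    _ = (∫ t : ℝ, Real.exp (-(1/2) * t ^ 2)) * Real.exp (c ^ 2 / 2) := by
        rw [integral_sub_right_eq_self (fun t => Real.exp (-(1/2) * t ^ 2)) c]
    _ = Real.sqrt (2 * Real.pi) * Real.exp (c ^ 2 / 2) := by
        rw [integral_gaussian]
        rw [show Real.pi/(1/2) = 2*Real.pi by ring]

lemma one_add_sq_half_le_cosh (y : ℝ) : 1 + y ^ 2 / 2 ≤ Real.cosh y := by
  have h := sum_le_hasSum ({0, 1} : Finset ℕ)
    (fun i _ => div_nonneg ((even_two_mul i).pow_nonneg y) (by positivity)) (Real.hasSum_cosh y)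
  simpa [Finset.sum_pair, Nat.factorial] using h

lemma cosh_pow_le_exp (x : ℝ) (N : ℕ) :
    Real.cosh (x / Real.sqrt N) ^ N ≤ Real.exp (x ^ 2 / 2) := by
  rcases Nat.eq_zero_or_pos N with h | h
  · subst h; simpa using Real.one_le_exp (by positivity)
  · have hN : (0:ℝ) < N := by exact_mod_cast h
    have hy : (x / Real.sqrt N) ^ 2 = x ^ 2 / N := by
      rw [div_pow, Real.sq_sqrt hN.le]
    calc Real.cosh (x / Real.sqrt N) ^ N
        ≤ Real.exp ((x / Real.sqrt N) ^ 2 / 2) ^ N := by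
          exact pow_le_pow_left₀ (Real.cosh_pos _).le (Real.cosh_le_exp_half_sq _) N
      _ = Real.exp ((N : ℝ) * ((x / Real.sqrt N) ^ 2 / 2)) := by
          rw [← Real.exp_nat_mul]
      _ = Real.exp (x ^ 2 / 2) := by
          rw [hy]; congr 1; field_simp

lemma cosh_pow_tendsto (x : ℝ) :
    Tendsto (fun N : ℕ => Real.cosh (x / Real.sqrt N) ^ N) atTop
      (nhds (Real.exp (x ^ 2 / 2))) := by
  refine tendsto_of_tendsto_of_tendsto_of_le_of_le'
    (Real.tendsto_one_add_div_pow_exp (x ^ 2 / 2)) tendsto_const_nhds ?_ ?_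
  · filter_upwards [eventually_ge_atTop 1] with N hN
    have hNpos : (0:ℝ) < N := by exact_mod_cast hN
    have hy : (x / Real.sqrt N) ^ 2 = x ^ 2 / N := by
      rw [div_pow, Real.sq_sqrt hNpos.le]
    have h1 : 1 + x ^ 2 / 2 / N = 1 + (x / Real.sqrt N) ^ 2 / 2 := by
      rw [hy]; ring
    rw [h1]
    exact pow_le_pow_left₀ (by positivity) (one_add_sq_half_le_cosh _) N
  · exact Eventually.of_forall (fun N => cosh_pow_le_exp x N)

lemma exp_integrable_dirac (a x : ℝ) :
    Integrable (fun y : ℝ => Real.exp (a * y)) (Measure.dirac x) := by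
  refine ⟨(Real.continuous_exp.comp (continuous_const.mul continuous_id)).aestronglyMeasurable, ?_⟩
  rw [hasFiniteIntegral_def, lintegral_dirac]
  exact ENNReal.coe_lt_top

lemma single_mgf {Ω : Type*} [MeasurableSpace Ω] (P : Measure Ω)
    (Y : Ω → ℝ) (hm : Measurable Y)
    (hd : Measure.map Y P
      = ((1 : ENNReal) / 2) • (Measure.dirac (1 : ℝ) + Measure.dirac (-1 : ℝ)))
    (a : ℝ) : ∫ ω, Real.exp (a * Y ω) ∂P = Real.cosh a := by
  have hsm : AEStronglyMeasurable (fun y : ℝ => Real.exp (a * y)) (Measure.map Y P) :=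
    (Real.continuous_exp.comp (continuous_const.mul continuous_id)).aestronglyMeasurable
  have hmap := integral_map (μ := P) hm.aemeasurable hsm
  rw [← hmap, hd, integral_smul_measure,
    integral_add_measure (exp_integrable_dirac a 1) (exp_integrable_dirac a (-1)),
    integral_dirac, integral_dirac, Real.cosh_eq]
  simp
  ring

lemma sum_mgf {Ω : Type*} [MeasurableSpace Ω] (P : Measure Ω) [IsProbabilityMeasure P]
    (X : ℕ → Ω → ℝ) (hmeas : ∀ i, Measurable (X i))
    (hindep : iIndepFun X P)
    (hdist : ∀ i, Measure.map (X i) P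
      = ((1 : ENNReal) / 2) • (Measure.dirac (1 : ℝ) + Measure.dirac (-1 : ℝ)))
    (a : ℝ) (N : ℕ) :
    ∫ ω, Real.exp (a * ∑ i ∈ Finset.range N, X i ω) ∂P = Real.cosh a ^ N := by
  have h := hindep.mgf_sum hmeas (Finset.range N) (t := a)
  simp only [mgf, Finset.sum_apply] at h
  rw [h]
  have : ∀ i ∈ Finset.range N, ∫ ω, Real.exp (a * X i ω) ∂P = Real.cosh a := by
    intro i _
    exact single_mgf P (X i) (hmeas i) (hdist i) a
  rw [Finset.prod_congr rfl this, Finset.prod_const, Finset.card_range]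

lemma abs_le_one_ae {Ω : Type*} [MeasurableSpace Ω] (P : Measure Ω)
    (Y : Ω → ℝ) (hm : Measurable Y)
    (hd : Measure.map Y P
      = ((1 : ENNReal) / 2) • (Measure.dirac (1 : ℝ) + Measure.dirac (-1 : ℝ))) :
    ∀ᵐ ω ∂P, |Y ω| ≤ 1 := by
  have hS : MeasurableSet {x : ℝ | 1 < |x|} :=
    measurableSet_lt measurable_const (continuous_abs.measurable)
  have h0 : P {ω | ¬ |Y ω| ≤ 1} = 0 := by
    have hset : {ω | ¬ |Y ω| ≤ 1} = Y ⁻¹' {x : ℝ | 1 < |x|} := by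
      ext ω; simp [not_le]
    rw [hset, ← Measure.map_apply hm hS, hd]
    simp [Measure.dirac_apply' _ hS]
  exact (ae_iff).2 h0

lemma sum_abs_le_ae {Ω : Type*} [MeasurableSpace Ω] (P : Measure Ω)
    (X : ℕ → Ω → ℝ) (hmeas : ∀ i, Measurable (X i))
    (hdist : ∀ i, Measure.map (X i) P
      = ((1 : ENNReal) / 2) • (Measure.dirac (1 : ℝ) + Measure.dirac (-1 : ℝ)))
    (N : ℕ) :
    ∀ᵐ ω ∂P, |∑ i ∈ Finset.range N, X i ω| ≤ N := by
  have h : ∀ᵐ ω ∂P, ∀ i ∈ Finset.range N, |X i ω| ≤ 1 :=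
    (ae_ball_iff (Finset.range N).countable_toSet).2
      (fun i _ => abs_le_one_ae P (X i) (hmeas i) (hdist i))
  filter_upwards [h] with ω hω
  calc |∑ i ∈ Finset.range N, X i ω| ≤ ∑ i ∈ Finset.range N, |X i ω| :=
        Finset.abs_sum_le_sum_abs _ _
    _ ≤ ∑ _i ∈ Finset.range N, (1:ℝ) := Finset.sum_le_sum hω
    _ = N := by simp


lemma key_identity {Ω : Type*} [MeasurableSpace Ω] (P : Measure Ω) [IsProbabilityMeasure P]
    (X : ℕ → Ω → ℝ) (hmeas : ∀ i, Measurable (X i))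
    (hindep : iIndepFun X P)
    (hdist : ∀ i, Measure.map (X i) P
      = ((1 : ENNReal) / 2) • (Measure.dirac (1 : ℝ) + Measure.dirac (-1 : ℝ)))
    (J : ℝ) (hJ0 : 0 < J) (N : ℕ) :
    ∫ ω, Real.exp ((J / 2) * ((∑ i ∈ Finset.range N, X i ω) / Real.sqrt N) ^ 2) ∂P
      = (Real.sqrt (2 * Real.pi))⁻¹ *
        ∫ t : ℝ, Real.exp (-(t ^ 2) / 2) * Real.cosh (Real.sqrt J * t / Real.sqrt N) ^ N := by
  set c : ℝ := (Real.sqrt (2 * Real.pi))⁻¹ with hc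
  have h2pi : (0:ℝ) < Real.sqrt (2 * Real.pi) := Real.sqrt_pos.2 (by positivity)
  set S : Ω → ℝ := fun ω => ∑ i ∈ Finset.range N, X i ω with hS
  have hSmeas : Measurable S := Finset.measurable_sum _ (fun i _ => hmeas i)
  -- pointwise Gaussian representation
  have step1 : ∀ s : ℝ, Real.exp ((J / 2) * (s / Real.sqrt N) ^ 2)
      = c * ∫ t : ℝ, Real.exp (-(t ^ 2) / 2 + (Real.sqrt J * (s / Real.sqrt N)) * t) := by
    intro s
    rw [gauss_lin, ← mul_assoc, hc, inv_mul_cancel₀ h2pi.ne', one_mul]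
    congr 1
    rw [mul_pow, Real.sq_sqrt hJ0.le]
    ring
  set F : Ω → ℝ → ℝ :=
    fun ω t => Real.exp (-(t ^ 2) / 2 + (Real.sqrt J * (S ω / Real.sqrt N)) * t) with hF
  -- a.e. bound on S/√N
  have habs : ∀ᵐ ω ∂P, |S ω / Real.sqrt N| ≤ (N : ℝ) := by
    rcases Nat.eq_zero_or_pos N with h | h
    · subst h
      refine Eventually.of_forall (fun ω => ?_)
      simp [hS]
    · have hN1 : (1:ℝ) ≤ Real.sqrt N := by
        rw [show (1:ℝ) = Real.sqrt 1 by simp]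
        exact Real.sqrt_le_sqrt (by exact_mod_cast h)
      filter_upwards [sum_abs_le_ae P X hmeas hdist N] with ω hω
      have : |S ω / Real.sqrt N| = |S ω| / Real.sqrt N := by
        rw [abs_div, abs_of_nonneg (Real.sqrt_nonneg _)]
      rw [this]
      calc |S ω| / Real.sqrt N ≤ |S ω| / 1 :=
            div_le_div_of_nonneg_left (abs_nonneg _) (by linarith) hN1
        _ = |S ω| := div_one _
        _ ≤ N := hω
  -- integrability on the product
  have hFm : AEStronglyMeasurable (Function.uncurry F) (P.prod volume) := by
    apply Continuous.comp_aestronglyMeasurable (g := Real.exp) Real.continuous_exp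
    apply AEStronglyMeasurable.add
    · exact (((measurable_snd.pow_const 2).neg.div_const 2)).aestronglyMeasurable
    · exact ((((hSmeas.comp measurable_fst).div_const _).const_mul _).mul
        measurable_snd).aestronglyMeasurable
  have hguse : Integrable (fun z : Ω × ℝ =>
      Real.exp ((Real.sqrt J * N) ^ 2) * Real.exp (-(1/4 : ℝ) * z.2 ^ 2)) (P.prod volume) := by
    exact (integrable_const (μ := P) (Real.exp ((Real.sqrt J * N) ^ 2))).mul_prod (integrable_exp_neg_mul_sq (by norm_num : (0:ℝ) < 1/4))
  have hFint : Integrable (Function.uncurry F) (P.prod volume) := by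
    apply hguse.mono' hFm
    have hae : ∀ᵐ ω ∂P, ∀ᵐ t : ℝ ∂volume, ‖Function.uncurry F (ω, t)‖ ≤
        Real.exp ((Real.sqrt J * N) ^ 2) * Real.exp (-(1/4 : ℝ) * t ^ 2) := by
      filter_upwards [habs] with ω hω
      refine Eventually.of_forall (fun t => ?_)
      have hb : (Real.sqrt J * (S ω / Real.sqrt N)) * t
          ≤ (Real.sqrt J * N) * |t| := by
        calc (Real.sqrt J * (S ω / Real.sqrt N)) * t
            ≤ |(Real.sqrt J * (S ω / Real.sqrt N)) * t| := le_abs_self _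
          _ = Real.sqrt J * |S ω / Real.sqrt N| * |t| := by
              rw [abs_mul, abs_mul, abs_of_nonneg (Real.sqrt_nonneg _)]
          _ ≤ (Real.sqrt J * N) * |t| := by
              have := mul_le_mul_of_nonneg_left hω (Real.sqrt_nonneg J)
              exact mul_le_mul_of_nonneg_right this (abs_nonneg _)
      have hb2 : (Real.sqrt J * N) * |t| ≤ t ^ 2 / 4 + (Real.sqrt J * N) ^ 2 := by
        nlinarith [sq_nonneg (|t| / 2 - Real.sqrt J * N), sq_abs t]
      have harg : -(t ^ 2) / 2 + (Real.sqrt J * (S ω / Real.sqrt N)) * t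
          ≤ (Real.sqrt J * N) ^ 2 + (-(1/4 : ℝ) * t ^ 2) := by nlinarith
      calc ‖Function.uncurry F (ω, t)‖ = F ω t := by
            simp only [Function.uncurry_apply_pair, hF, Real.norm_eq_abs,
              abs_of_nonneg (Real.exp_nonneg _)]
        _ ≤ Real.exp ((Real.sqrt J * N) ^ 2 + (-(1/4 : ℝ) * t ^ 2)) := Real.exp_le_exp.2 harg
        _ = Real.exp ((Real.sqrt J * N) ^ 2) * Real.exp (-(1/4 : ℝ) * t ^ 2) := Real.exp_add _ _
    have hFmeas' : Measurable (Function.uncurry F) := by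
      apply Measurable.exp
      exact ((measurable_snd.pow_const 2).neg.div_const 2).add
        ((((hSmeas.comp measurable_fst).div_const _).const_mul _).mul measurable_snd)
    rw [Measure.ae_prod_iff_ae_ae]
    · exact hae
    · exact measurableSet_le hFmeas'.norm
        ((measurable_const.mul ((measurable_snd.pow_const 2).const_mul _).exp))
  calc ∫ ω, Real.exp ((J / 2) * ((∑ i ∈ Finset.range N, X i ω) / Real.sqrt N) ^ 2) ∂P
      = ∫ ω, (c * ∫ t : ℝ, F ω t) ∂P := by
        refine integral_congr_ae (Eventually.of_forall (fun ω => ?_))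
        exact step1 (S ω)
    _ = c * ∫ ω, (∫ t : ℝ, F ω t) ∂P := integral_const_mul c _
    _ = c * ∫ t : ℝ, (∫ ω, F ω t ∂P) := by rw [integral_integral_swap hFint]
    _ = c * ∫ t : ℝ, Real.exp (-(t ^ 2) / 2) *
          Real.cosh (Real.sqrt J * t / Real.sqrt N) ^ N := by
        congr 1
        refine integral_congr_ae (Eventually.of_forall (fun t => ?_))
        have h1 : ∀ ω, F ω t = Real.exp (-(t ^ 2) / 2) *
            Real.exp ((Real.sqrt J * t / Real.sqrt N) * S ω) := by
          intro ω
          simp only [hF, ← Real.exp_add]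
          congr 1
          ring
        show ∫ ω, F ω t ∂P = Real.exp (-(t ^ 2) / 2) * Real.cosh (Real.sqrt J * t / Real.sqrt N) ^ N
        rw [integral_congr_ae (μ := P) (Eventually.of_forall h1), integral_const_mul]
        congr 1
        have := sum_mgf P X hmeas hindep hdist (Real.sqrt J * t / Real.sqrt N) N
        simpa [hS] using this

/-- Subcritical Curie–Weiss partition function asymptotics: for i.i.d. symmetric
±1 random variables and 0 < J < 1,
Z_{J,N} = E[exp((J/2)·(N^{-1/2}·Σ X_i)²)] → 1/√(1-J). -/
theorem curie_weiss_partition_function_limit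
    {Ω : Type*} [MeasurableSpace Ω] (P : Measure Ω) [IsProbabilityMeasure P]
    (X : ℕ → Ω → ℝ) (hmeas : ∀ i, Measurable (X i))
    (hindep : iIndepFun X P)
    (hdist : ∀ i, Measure.map (X i) P
      = ((1 : ENNReal) / 2) • (Measure.dirac (1 : ℝ) + Measure.dirac (-1 : ℝ)))
    (J : ℝ) (hJ0 : 0 < J) (hJ1 : J < 1) :
    Tendsto (fun N : ℕ =>
        ∫ ω, Real.exp ((J / 2) * ((∑ i ∈ Finset.range N, X i ω) / Real.sqrt N) ^ 2) ∂P)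
      atTop (nhds (1 / Real.sqrt (1 - J))) := by
  have key : ∀ N : ℕ,
      (∫ ω, Real.exp ((J / 2) * ((∑ i ∈ Finset.range N, X i ω) / Real.sqrt N) ^ 2) ∂P)
      = (Real.sqrt (2 * Real.pi))⁻¹ *
        ∫ t : ℝ, Real.exp (-(t ^ 2) / 2) * Real.cosh (Real.sqrt J * t / Real.sqrt N) ^ N :=
    fun N => key_identity P X hmeas hindep hdist J hJ0 N
  rw [tendsto_congr key]
  have h1J : (0:ℝ) < 1 - J := by linarith
  have h2pi : (0:ℝ) < Real.sqrt (2 * Real.pi) := Real.sqrt_pos.2 (by positivity)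
  have hGle : ∀ (N : ℕ) (t : ℝ), Real.exp (-(t ^ 2) / 2) *
      Real.cosh (Real.sqrt J * t / Real.sqrt N) ^ N ≤ Real.exp (-((1 - J) / 2) * t ^ 2) := by
    intro N t
    calc Real.exp (-(t ^ 2) / 2) * Real.cosh (Real.sqrt J * t / Real.sqrt N) ^ N
        ≤ Real.exp (-(t ^ 2) / 2) * Real.exp ((Real.sqrt J * t) ^ 2 / 2) :=
          mul_le_mul_of_nonneg_left (cosh_pow_le_exp (Real.sqrt J * t) N)
            (Real.exp_nonneg _)
      _ = Real.exp (-((1 - J) / 2) * t ^ 2) := by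
          rw [← Real.exp_add, mul_pow, Real.sq_sqrt hJ0.le]
          congr 1; ring
  have hDCT : Tendsto (fun N : ℕ => ∫ t : ℝ, Real.exp (-(t ^ 2) / 2) *
      Real.cosh (Real.sqrt J * t / Real.sqrt N) ^ N) atTop
      (nhds (∫ t : ℝ, Real.exp (-((1 - J) / 2) * t ^ 2))) := by
    refine tendsto_integral_of_dominated_convergence
      (fun t => Real.exp (-((1 - J) / 2) * t ^ 2)) (fun N => ?_) ?_ ?_ ?_
    · exact (Real.continuous_exp.comp ((continuous_pow 2).neg.div_const 2)).mul
        ((Real.continuous_cosh.comp ((continuous_const.mul continuous_id).div_const _)).pow N)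
        |>.aestronglyMeasurable
    · exact integrable_exp_neg_mul_sq (by linarith)
    · intro N
      refine Eventually.of_forall (fun t => ?_)
      rw [Real.norm_eq_abs, abs_of_nonneg (by positivity)]
      exact hGle N t
    · refine Eventually.of_forall (fun t => ?_)
      have h := (cosh_pow_tendsto (Real.sqrt J * t)).const_mul (Real.exp (-(t ^ 2) / 2))
      have heq : Real.exp (-(t ^ 2) / 2) * Real.exp ((Real.sqrt J * t) ^ 2 / 2)
          = Real.exp (-((1 - J) / 2) * t ^ 2) := by
        rw [← Real.exp_add, mul_pow, Real.sq_sqrt hJ0.le]; congr 1; ring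
      rw [heq] at h
      exact h
  have hval : (Real.sqrt (2 * Real.pi))⁻¹ * ∫ t : ℝ, Real.exp (-((1 - J) / 2) * t ^ 2)
      = 1 / Real.sqrt (1 - J) := by
    have h1 : Real.pi / ((1 - J) / 2) = 2 * Real.pi / (1 - J) := by
      field_simp
    rw [integral_gaussian, h1, Real.sqrt_div (by positivity : (0:ℝ) ≤ 2 * Real.pi)]
    rw [div_eq_mul_inv, ← mul_assoc, inv_mul_cancel₀ h2pi.ne', one_mul, one_div]
  have := hDCT.const_mul ((Real.sqrt (2 * Real.pi))⁻¹)
  rw [hval] at this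
  exact this
end
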